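/- (Gowers) Let G be a finite d-quasirandom group of order n, i.e., every nontrivial complex irreducible representation of G has dimension at least d. If A, B, C ⊆ G satisfy |A|·|B|·|C| > n³/d, then there exist a ∈ A, b ∈ B, c ∈ C with ab = c. -/

import Mathlib

open scoped BigOperators

section GowersAux


set_option linter.unusedSectionVars false
set_option maxHeartbeats 1000000
set_option linter.unusedVariables false

open scoped BigOperators ComplexConjugate
open Finset

variable {G : Type*} [Group G] [Fintype G] [DecidableEq G]

/-- convolution operator: `(convOp f) φ x = ∑ y, f y * φ (y⁻¹ x)`. -/
noncomputable def convOp (f : G → ℂ) : EuclideanSpace ℂ G →ₗ[ℂ] EuclideanSpace ℂ G where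
  toFun φ := WithLp.toLp 2 (fun x => ∑ y, f y * φ (y⁻¹ * x))
  map_add' φ ψ := by
    ext x
    simp [PiLp.add_apply, mul_add, Finset.sum_add_distrib]
  map_smul' c φ := by
    ext x
    simp only [PiLp.smul_apply, smul_eq_mul, RingHom.id_apply, Finset.mul_sum]
    exact Finset.sum_congr rfl fun y _ => by ring

lemma convOp_apply (f : G → ℂ) (φ : EuclideanSpace ℂ G) (x : G) :
    convOp f φ x = ∑ y, f y * φ (y⁻¹ * x) := rfl

/-- right translation `rt g φ x = φ (x * g)`. -/
noncomputable def rt (g : G) : EuclideanSpace ℂ G →ₗ[ℂ] EuclideanSpace ℂ G where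
  toFun φ := WithLp.toLp 2 (fun x => φ (x * g))
  map_add' φ ψ := rfl
  map_smul' c φ := rfl

lemma rt_apply (g : G) (φ : EuclideanSpace ℂ G) (x : G) : rt g φ x = φ (x * g) := rfl

lemma convOp_comm_rt (f : G → ℂ) (g : G) :
    convOp f ∘ₗ rt g = rt g ∘ₗ convOp f := by
  ext φ x
  show ∑ y, f y * φ (y⁻¹ * x * g) = ∑ y, f y * φ (y⁻¹ * (x * g))
  exact Finset.sum_congr rfl fun y _ => by rw [mul_assoc]

lemma rt_one : rt (1 : G) = LinearMap.id := by
  ext φ x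
  show φ (x * 1) = φ x
  rw [mul_one]

lemma rt_mul (g h : G) : rt (g * h) = rt g ∘ₗ rt h := by
  ext φ x
  show φ (x * (g * h)) = φ (x * g * h)
  rw [mul_assoc]

local notation "⟪" x ", " y "⟫" => @inner ℂ _ _ x y

/-- the function giving the adjoint of `convOp f`. -/
noncomputable def fstar (f : G → ℂ) : G → ℂ := fun y => conj (f y⁻¹)

lemma adjoint_convOp (f : G → ℂ) :
    LinearMap.adjoint (convOp f) = convOp (fstar f) := by
  symm
  rw [LinearMap.eq_adjoint_iff]
  intro φ ψ
  simp only [PiLp.inner_apply, RCLike.inner_apply', convOp_apply, fstar]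
  have lhs : ∀ x : G, conj (∑ y, conj (f y⁻¹) * φ (y⁻¹ * x)) * ψ x
      = ∑ y, f y * conj (φ (y * x)) * ψ x := by
    intro x
    rw [map_sum, Finset.sum_mul]
    refine Fintype.sum_equiv (Equiv.inv G) _ _ fun y => ?_
    simp only [Equiv.inv_apply, map_mul, RingHomCompTriple.comp_apply, RingHom.id_apply,
      Complex.conj_conj, inv_inv]
  have rhs : ∀ x : G, conj (φ x) * ∑ y, f y * ψ (y⁻¹ * x)
      = ∑ y, f y * conj (φ x) * ψ (y⁻¹ * x) := by
    intro x
    rw [Finset.mul_sum]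
    exact Finset.sum_congr rfl fun y _ => by ring
  simp only [lhs, rhs]
  calc ∑ x, ∑ y, f y * conj (φ (y * x)) * ψ x
      = ∑ y, ∑ x, f y * conj (φ (y * x)) * ψ x := Finset.sum_comm
    _ = ∑ y, ∑ x, f y * conj (φ x) * ψ (y⁻¹ * x) := by
        refine Finset.sum_congr rfl fun y _ => ?_
        refine Fintype.sum_equiv (Equiv.mulLeft y) _ _ fun x => ?_
        simp only [Equiv.coe_mulLeft]
        rw [inv_mul_cancel_left]
    _ = ∑ x, ∑ y, f y * conj (φ x) * ψ (y⁻¹ * x) := Finset.sum_comm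

lemma sum_convOp_apply (f : G → ℂ) (φ : EuclideanSpace ℂ G) :
    ∑ x, convOp f φ x = (∑ y, f y) * (∑ x, φ x) := by
  simp only [convOp_apply]
  rw [Finset.sum_comm, Finset.sum_mul]
  refine Finset.sum_congr rfl fun y _ => ?_
  rw [Finset.mul_sum]
  refine Fintype.sum_equiv (Equiv.mulLeft y⁻¹) _ _ fun x => ?_
  simp only [Equiv.coe_mulLeft]

lemma sum_fstar (f : G → ℂ) (hf : ∑ y, f y = 0) : ∑ y, fstar f y = 0 := by
  have : ∑ y, fstar f y = conj (∑ y, f y⁻¹) := by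
    rw [map_sum]; rfl
  rw [this]
  have : ∑ y : G, f y⁻¹ = ∑ y : G, f y :=
    Fintype.sum_equiv (Equiv.inv G) _ _ fun y => by simp
  rw [this, hf, map_zero]

section Abstract
variable {E : Type*} [NormedAddCommGroup E] [InnerProductSpace ℂ E]

lemma parseval {ι : Type*} [Fintype ι] (c : OrthonormalBasis ι ℂ E) (v : E) :
    ‖v‖ ^ 2 = ∑ j, ‖(⟪c j, v⟫)‖ ^ 2 := by
  have h1 : ‖v‖ = ‖c.repr v‖ := (c.repr.norm_map v).symm
  rw [h1, EuclideanSpace.norm_eq, Real.sq_sqrt (Finset.sum_nonneg fun j _ => by positivity)]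
  exact Finset.sum_congr rfl fun j _ => by rw [c.repr_apply_apply]

lemma hs_eq [FiniteDimensional ℂ E] {ι κ : Type*} [Fintype ι] [Fintype κ]
    (T : E →ₗ[ℂ] E) (b : OrthonormalBasis ι ℂ E) (c : OrthonormalBasis κ ℂ E) :
    ∑ i, ‖T (b i)‖ ^ 2 = ∑ j, ‖LinearMap.adjoint T (c j)‖ ^ 2 := by
  calc ∑ i, ‖T (b i)‖ ^ 2 = ∑ i, ∑ j, ‖(⟪c j, T (b i)⟫)‖ ^ 2 :=
        Finset.sum_congr rfl fun i _ => parseval c _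
    _ = ∑ j, ∑ i, ‖(⟪b i, LinearMap.adjoint T (c j)⟫)‖ ^ 2 := by
        rw [Finset.sum_comm]
        refine Finset.sum_congr rfl fun j _ => Finset.sum_congr rfl fun i _ => ?_
        have h1 : ⟪c j, T (b i)⟫ = ⟪LinearMap.adjoint T (c j), b i⟫ :=
          (LinearMap.adjoint_inner_left T (b i) (c j)).symm
        rw [h1, norm_inner_symm]
    _ = ∑ j, ‖LinearMap.adjoint T (c j)‖ ^ 2 :=
        Finset.sum_congr rfl fun j _ => (parseval b _).symm

lemma hs_indep [FiniteDimensional ℂ E] {ι κ : Type*} [Fintype ι] [Fintype κ]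
    (T : E →ₗ[ℂ] E) (b : OrthonormalBasis ι ℂ E) (c : OrthonormalBasis κ ℂ E) :
    ∑ i, ‖T (b i)‖ ^ 2 = ∑ j, ‖T (c j)‖ ^ 2 := by
  rw [hs_eq T b c, hs_eq (LinearMap.adjoint T) c c, LinearMap.adjoint_adjoint]

end Abstract

lemma convOp_single (f : G → ℂ) (x z : G) :
    convOp f (EuclideanSpace.single x 1) z = f (z * x⁻¹) := by
  rw [convOp_apply]
  have key : ∀ y : G, f y * (EuclideanSpace.single x (1:ℂ)) (y⁻¹ * z)
      = if y = z * x⁻¹ then f y else 0 := by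
    intro y
    rw [EuclideanSpace.single_apply]
    by_cases hy : y = z * x⁻¹
    · subst hy
      have : (z * x⁻¹)⁻¹ * z = x := by group
      rw [this]
      simp
    · have h2 : ¬(y⁻¹ * z = x) := fun hc => hy (by rw [← hc]; group)
      simp [h2, hy]
  rw [Finset.sum_congr rfl fun y _ => key y, Finset.sum_ite_eq' Finset.univ (z * x⁻¹) f]
  simp

lemma sq_norm_convOp_single (f : G → ℂ) (x : G) :
    ‖convOp f (EuclideanSpace.single x 1)‖ ^ 2 = ∑ y, ‖f y‖ ^ 2 := by
  rw [EuclideanSpace.norm_eq, Real.sq_sqrt (Finset.sum_nonneg fun z _ => by positivity)]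
  refine Fintype.sum_equiv (Equiv.mulRight x⁻¹) _ _ fun z => ?_
  rw [convOp_single]
  rfl

lemma d_le_finrank_inv_subspace
    (d : ℝ)
    (hqr : ∀ (V : Type) [AddCommGroup V] [Module ℂ V] [FiniteDimensional ℂ V]
      (ρ : Representation ℂ G V),
      Nontrivial V →
      (∀ p : Submodule ℂ V, (∀ (g : G) (v : V), v ∈ p → ρ g v ∈ p) → p = ⊥ ∨ p = ⊤) →
      (∃ (g : G) (v : V), ρ g v ≠ v) →
      d ≤ (Module.finrank ℂ V : ℝ))
    (E : Submodule ℂ (EuclideanSpace ℂ G))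
    (hEbot : E ≠ ⊥)
    (hEinv : ∀ (g : G), ∀ v ∈ E, rt g v ∈ E)
    (hEmean : ∀ v ∈ E, ∑ x, v x = 0) :
    d ≤ (Module.finrank ℂ E : ℝ) := by
  classical
  -- choose a minimal nonzero invariant subspace of E
  set Q : Submodule ℂ (EuclideanSpace ℂ G) → Prop :=
    fun p => p ≠ ⊥ ∧ p ≤ E ∧ ∀ g, ∀ v ∈ p, rt g v ∈ p with hQ
  have hexists : ∃ n, ∃ p, Q p ∧ Module.finrank ℂ p = n :=
    ⟨_, E, ⟨hEbot, le_rfl, hEinv⟩, rfl⟩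
  obtain ⟨W, hQW, hWrank⟩ := Nat.find_spec hexists
  have hmin : ∀ p, Q p → Nat.find hexists ≤ Module.finrank ℂ p := by
    intro p hp
    by_contra hlt
    exact Nat.find_min hexists (lt_of_not_ge hlt) ⟨p, hp, rfl⟩
  set k := Module.finrank ℂ W with hk
  have hk0 : k ≠ 0 := by
    rw [hk]
    intro h0
    exact hQW.1 (Submodule.finrank_eq_zero.mp h0)
  -- the restricted representation on W, transported to `Fin k → ℂ`
  have hres : ∀ g : G, ∀ v ∈ W, rt g v ∈ W := hQW.2.2
  set r : G → (↥W →ₗ[ℂ] ↥W) := fun g => (rt g).restrict (hres g) with hr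
  have hr_coe : ∀ (g : G) (w : ↥W), (↑(r g w) : EuclideanSpace ℂ G) = rt g ↑w :=
    fun g w => rfl
  have hr_mul : ∀ g h : G, r (g * h) = r g ∘ₗ r h := by
    intro g h
    refine LinearMap.ext fun w => Subtype.ext ?_
    show (rt (g * h)) (↑w : EuclideanSpace ℂ G) = rt g (rt h ↑w)
    rw [rt_mul]
    rfl
  have hr_one : r 1 = LinearMap.id := by
    refine LinearMap.ext fun w => Subtype.ext ?_
    show rt 1 (↑w : EuclideanSpace ℂ G) = ↑w
    rw [rt_one]
    rfl
  set e : ↥W ≃ₗ[ℂ] (Fin k → ℂ) := (Module.finBasis ℂ ↥W).equivFun with he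
  set ρ₀ : Representation ℂ G (Fin k → ℂ) :=
    { toFun := fun g => e.toLinearMap ∘ₗ r g ∘ₗ e.symm.toLinearMap
      map_one' := by
        show e.toLinearMap ∘ₗ r 1 ∘ₗ e.symm.toLinearMap = 1
        rw [hr_one]
        refine LinearMap.ext fun v => ?_
        simp
      map_mul' := by
        intro g h
        show e.toLinearMap ∘ₗ r (g * h) ∘ₗ e.symm.toLinearMap
          = (e.toLinearMap ∘ₗ r g ∘ₗ e.symm.toLinearMap)
            * (e.toLinearMap ∘ₗ r h ∘ₗ e.symm.toLinearMap)
        rw [hr_mul]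
        refine LinearMap.ext fun v => ?_
        simp [Module.End.mul_eq_comp, LinearMap.comp_apply] } with hρ₀
  have hρ₀_apply : ∀ (g : G) (w : ↥W), ρ₀ g (e w) = e (r g w) := by
    intro g w
    show e.toLinearMap (r g (e.symm (e w))) = e (r g w)
    rw [LinearEquiv.symm_apply_apply]
    rfl
  -- apply quasirandomness
  have hnontriv : Nontrivial (Fin k → ℂ) := by
    haveI : Nonempty (Fin k) := ⟨⟨0, Nat.pos_of_ne_zero hk0⟩⟩
    infer_instance
  have hirr : ∀ p : Submodule ℂ (Fin k → ℂ),
      (∀ (g : G) (v : Fin k → ℂ), v ∈ p → ρ₀ g v ∈ p) → p = ⊥ ∨ p = ⊤ := by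
    intro q hqinv
    by_cases hqbot : q = ⊥
    · exact Or.inl hqbot
    right
    set qW : Submodule ℂ ↥W := q.comap e.toLinearMap with hqW
    have hmemqW : ∀ w : ↥W, w ∈ qW ↔ e w ∈ q := fun w => Iff.rfl
    set qV : Submodule ℂ (EuclideanSpace ℂ G) := qW.map W.subtype with hqV
    have hqWbot : qW ≠ ⊥ := by
      intro hbot
      apply hqbot
      rw [Submodule.eq_bot_iff]
      intro v hv
      have h1 : e.symm v ∈ qW := by
        rw [hmemqW, LinearEquiv.apply_symm_apply]
        exact hv
      rw [hbot, Submodule.mem_bot] at h1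
      have := congrArg e h1
      rw [LinearEquiv.apply_symm_apply, map_zero] at this
      exact this
    have hqVbot : qV ≠ ⊥ := by
      intro hbot
      apply hqWbot
      rw [Submodule.eq_bot_iff]
      intro w hw
      have h1 : (↑w : EuclideanSpace ℂ G) ∈ qV := Submodule.mem_map_of_mem hw
      rw [hbot, Submodule.mem_bot] at h1
      exact Subtype.ext h1
    have hqVinv : ∀ g, ∀ v ∈ qV, rt g v ∈ qV := by
      intro g v hv
      obtain ⟨w, hw, rfl⟩ := hv
      have h1 : r g w ∈ qW := by
        rw [hmemqW, ← hρ₀_apply]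
        exact hqinv g (e w) ((hmemqW w).mp hw)
      exact ⟨r g w, h1, (hr_coe g w).symm⟩
    have hQqV : Q qV := ⟨hqVbot, (Submodule.map_subtype_le W qW).trans hQW.2.1, hqVinv⟩
    have h1 : Nat.find hexists ≤ Module.finrank ℂ qV := hmin qV hQqV
    have h2 : Module.finrank ℂ qV = Module.finrank ℂ qW :=
      Submodule.finrank_map_subtype_eq W qW
    have h3 : Module.finrank ℂ qW = Module.finrank ℂ q := by
      rw [hqW, Submodule.comap_equiv_eq_map_symm]
      exact LinearEquiv.finrank_map_eq e.symm q
    have h4 : Module.finrank ℂ q ≤ k := by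
      have := Submodule.finrank_le q
      rwa [Module.finrank_fin_fun] at this
    have h5 : Module.finrank ℂ q = k := by
      omega
    exact Submodule.eq_top_of_finrank_eq (by rw [h5, Module.finrank_fin_fun])
  have hnonfix : ∃ (g : G) (v : Fin k → ℂ), ρ₀ g v ≠ v := by
    by_contra hfix
    push_neg at hfix
    have hfixW : ∀ (g : G) (w : ↥W), r g w = w := by
      intro g w
      have := hfix g (e w)
      rw [hρ₀_apply] at this
      exact e.injective this
    have hconst : ∀ (w : ↥W) (x : G), (↑w : EuclideanSpace ℂ G) x = (↑w : EuclideanSpace ℂ G) 1 := by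
      intro w x
      have h1 := congrArg (Subtype.val) (hfixW x w)
      have h2 := congrArg (fun u : EuclideanSpace ℂ G => u 1) h1
      show _ = _
      calc (↑w : EuclideanSpace ℂ G) x = (↑w : EuclideanSpace ℂ G) (1 * x) := by rw [one_mul]
        _ = rt x (↑w) 1 := rfl
        _ = (↑w : EuclideanSpace ℂ G) 1 := h2
    have : W = ⊥ := by
      rw [Submodule.eq_bot_iff]
      intro v hv
      have hmean := hEmean v (hQW.2.1 hv)
      have hcst := hconst ⟨v, hv⟩
      have hsum : ∑ x : G, v x = (Fintype.card G : ℂ) * v 1 := by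
        rw [Finset.sum_congr rfl fun x _ => hcst x]
        simp [Finset.card_univ, mul_comm]
      rw [hsum] at hmean
      have hcard : (Fintype.card G : ℂ) ≠ 0 := by
        exact_mod_cast Nat.cast_ne_zero.mpr Fintype.card_ne_zero
      have hv1 : v 1 = 0 := by
        rcases mul_eq_zero.mp hmean with h | h
        · exact absurd h hcard
        · exact h
      ext x
      have hcx : v x = v 1 := hcst x
      show v x = (0 : ℂ)
      rw [hcx, hv1]
    exact hQW.1 this
  have hd := hqr (Fin k → ℂ) ρ₀ hnontriv hirr hnonfix
  rw [Module.finrank_fin_fun] at hd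
  calc d ≤ (k : ℝ) := hd
    _ ≤ (Module.finrank ℂ E : ℝ) := by
        exact_mod_cast Submodule.finrank_mono hQW.2.1

theorem convOp_sq_norm_le
    (d : ℝ) (hd : 0 < d)
    (hqr : ∀ (V : Type) [AddCommGroup V] [Module ℂ V] [FiniteDimensional ℂ V]
      (ρ : Representation ℂ G V),
      Nontrivial V →
      (∀ p : Submodule ℂ V, (∀ (g : G) (v : V), v ∈ p → ρ g v ∈ p) → p = ⊥ ∨ p = ⊤) →
      (∃ (g : G) (v : V), ρ g v ≠ v) →
      d ≤ (Module.finrank ℂ V : ℝ))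
    (f : G → ℂ) (hf : ∑ y, f y = 0) (φ : EuclideanSpace ℂ G) :
    ‖convOp f φ‖ ^ 2 ≤ ((Fintype.card G : ℝ) / d) * (∑ y, ‖f y‖ ^ 2) * ‖φ‖ ^ 2 := by
  classical
  set T : EuclideanSpace ℂ G →ₗ[ℂ] EuclideanSpace ℂ G := convOp f with hT
  set S : EuclideanSpace ℂ G →ₗ[ℂ] EuclideanSpace ℂ G := LinearMap.adjoint T * T with hS
  have hSsym : S.IsSymmetric := LinearMap.isSymmetric_adjoint_mul_self T
  set N : ℕ := Fintype.card G with hNdef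
  have hN : Module.finrank ℂ (EuclideanSpace ℂ G) = N := finrank_euclideanSpace
  set b : OrthonormalBasis (Fin N) ℂ (EuclideanSpace ℂ G) := hSsym.eigenvectorBasis hN with hb
  set μ : Fin N → ℝ := hSsym.eigenvalues hN with hμ
  have hSb : ∀ i, S (b i) = (μ i : ℂ) • b i := fun i => hSsym.apply_eigenvectorBasis hN i
  have hbnorm : ∀ i, ‖b i‖ = 1 := fun i => b.orthonormal.1 i
  -- each eigenvalue equals ‖T (b i)‖²
  have hμval : ∀ i, μ i = ‖T (b i)‖ ^ 2 := by
    intro i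
    have h1 : ⟪b i, S (b i)⟫ = (μ i : ℂ) := by
      rw [hSb i, inner_smul_right, inner_self_eq_norm_sq_to_K, hbnorm i]
      norm_num
    have h2 : ⟪b i, S (b i)⟫ = ⟪T (b i), T (b i)⟫ := by
      rw [hS, Module.End.mul_apply]
      exact LinearMap.adjoint_inner_right T (b i) (T (b i))
    have h3 : ⟪T (b i), T (b i)⟫ = ((‖T (b i)‖ ^ 2 : ℝ) : ℂ) := by
      rw [inner_self_eq_norm_sq_to_K]; norm_num
    have := h1.symm.trans (h2.trans h3)
    exact_mod_cast this
  have hμnonneg : ∀ i, 0 ≤ μ i := fun i => (hμval i).symm ▸ sq_nonneg _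
  -- sum of eigenvalues
  have hμsum : ∑ i, μ i = (N : ℝ) * ∑ y, ‖f y‖ ^ 2 := by
    have h1 : ∑ i, μ i = ∑ i, ‖T (b i)‖ ^ 2 := Finset.sum_congr rfl fun i _ => hμval i
    have h2 : ∑ i, ‖T (b i)‖ ^ 2 = ∑ x, ‖T ((EuclideanSpace.basisFun G ℂ) x)‖ ^ 2 :=
      hs_indep T b (EuclideanSpace.basisFun G ℂ)
    have h3 : ∀ x : G, ‖T ((EuclideanSpace.basisFun G ℂ) x)‖ ^ 2 = ∑ y, ‖f y‖ ^ 2 := by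
      intro x
      rw [EuclideanSpace.basisFun_apply]
      exact sq_norm_convOp_single f x
    rw [h1, h2, Finset.sum_congr rfl fun x _ => h3 x, Finset.sum_const, Finset.card_univ]
    simp [nsmul_eq_mul, hNdef]
  -- top eigenvalue
  have hNpos : 0 < N := Fintype.card_pos
  haveI : Nonempty (Fin N) := ⟨⟨0, hNpos⟩⟩
  obtain ⟨i₀, hi₀⟩ := Finite.exists_max μ
  set lam : ℝ := μ i₀ with hlam
  -- Rayleigh bound
  have hRayleigh : ‖T φ‖ ^ 2 ≤ lam * ‖φ‖ ^ 2 := by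
    have h1 : ((‖T φ‖ ^ 2 : ℝ) : ℂ) = ⟪φ, S φ⟫ := by
      rw [hS, Module.End.mul_apply]
      rw [LinearMap.adjoint_inner_right T φ (T φ), inner_self_eq_norm_sq_to_K]
      norm_num
    have h2 : ⟪φ, S φ⟫ = ∑ i, ⟪φ, b i⟫ * ⟪b i, S φ⟫ :=
      (b.sum_inner_mul_inner φ (S φ)).symm
    have h3 : ∀ i, ⟪φ, b i⟫ * ⟪b i, S φ⟫ = ((μ i * ‖⟪b i, φ⟫‖ ^ 2 : ℝ) : ℂ) := by
      intro i
      have e1 : ⟪b i, S φ⟫ = (μ i : ℂ) * ⟪b i, φ⟫ := by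
        rw [← hSsym (b i) φ, hSb i, inner_smul_left, Complex.conj_ofReal]
      rw [e1, ← inner_conj_symm φ (b i)]
      have e2 : (starRingEnd ℂ) ⟪b i, φ⟫ * ((μ i : ℂ) * ⟪b i, φ⟫)
          = (μ i : ℂ) * ((starRingEnd ℂ) ⟪b i, φ⟫ * ⟪b i, φ⟫) := by ring
      rw [e2, RCLike.conj_mul]
      push_cast
      rfl
    have h4 : ‖T φ‖ ^ 2 = ∑ i, μ i * ‖⟪b i, φ⟫‖ ^ 2 := by
      have := h1.trans (h2.trans (Finset.sum_congr rfl fun i _ => h3 i))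
      rw [← Complex.ofReal_sum] at this
      exact_mod_cast this
    rw [h4, parseval b φ, Finset.mul_sum]
    refine Finset.sum_le_sum fun i _ => ?_
    exact mul_le_mul_of_nonneg_right (hi₀ i) (by positivity)
  rcases le_or_gt lam 0 with hlam0 | hlam0
  · have h0 : ‖T φ‖ ^ 2 ≤ 0 :=
      hRayleigh.trans (mul_nonpos_of_nonpos_of_nonneg hlam0 (by positivity))
    have : (0:ℝ) ≤ ((N : ℝ) / d) * (∑ y, ‖f y‖ ^ 2) * ‖φ‖ ^ 2 := by positivity
    linarith
  -- lam > 0 : use quasirandomness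
  · set E : Submodule ℂ (EuclideanSpace ℂ G) := Module.End.eigenspace S ((lam : ℝ) : ℂ) with hE
    have hmemE : ∀ v, v ∈ E ↔ S v = ((lam : ℝ) : ℂ) • v := fun v => Module.End.mem_eigenspace_iff
    have hbi₀E : b i₀ ∈ E := by rw [hmemE]; exact hSb i₀
    have hEbot : E ≠ ⊥ := by
      intro hbot
      have hz : b i₀ = 0 := by rw [hbot, Submodule.mem_bot] at hbi₀E; exact hbi₀E
      have h1 := hbnorm i₀
      rw [hz, norm_zero] at h1
      norm_num at h1
    have hS2 : S = convOp (fstar f) ∘ₗ convOp f := by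
      rw [hS, hT, Module.End.mul_eq_comp, adjoint_convOp]
    have hScomm : ∀ g : G, S ∘ₗ rt g = rt g ∘ₗ S := by
      intro g
      rw [hS2, LinearMap.comp_assoc, convOp_comm_rt, ← LinearMap.comp_assoc,
        convOp_comm_rt, LinearMap.comp_assoc]
    have hEinv : ∀ (g : G), ∀ v ∈ E, rt g v ∈ E := by
      intro g v hv
      rw [hmemE] at hv ⊢
      have h1 : S (rt g v) = rt g (S v) := by
        have := congrArg (fun (L : EuclideanSpace ℂ G →ₗ[ℂ] EuclideanSpace ℂ G) => L v)
          (hScomm g)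
        simpa using this
      rw [h1, hv, map_smul]
    have hEmean : ∀ v ∈ E, ∑ x, v x = 0 := by
      intro v hv
      rw [hmemE] at hv
      have h1 : ∑ x, (S v) x = 0 := by
        have hSv : S v = convOp (fstar f) (convOp f v) := by
          rw [hS2]; rfl
        rw [hSv, sum_convOp_apply, sum_fstar f hf, zero_mul]
      rw [hv] at h1
      have h2 : ∑ x, (((lam : ℝ) : ℂ) • v) x = ((lam : ℝ) : ℂ) * ∑ x, v x := by
        rw [Finset.mul_sum]
        exact Finset.sum_congr rfl fun x _ => rfl
      rw [h2] at h1
      rcases mul_eq_zero.mp h1 with h | h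
      · exact absurd h (by exact_mod_cast ne_of_gt hlam0)
      · exact h
    have hdE : d ≤ (Module.finrank ℂ E : ℝ) :=
      d_le_finrank_inv_subspace d hqr E hEbot hEinv hEmean
    -- finrank E ≤ number of eigenvalues equal to lam
    set P : Finset (Fin N) := Finset.univ.filter (fun i => μ i = lam) with hP
    have hfinE : Module.finrank ℂ E ≤ P.card := by
      set Wspan : Submodule ℂ (EuclideanSpace ℂ G) :=
        Submodule.span ℂ (Set.range fun j : {j : Fin N // μ j ≠ lam} => b j) with hWspan
      have hEperp : E ≤ Wspanᗮ := by
        intro v hv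
        rw [hmemE] at hv
        rw [Submodule.mem_orthogonal]
        intro u hu
        refine Submodule.span_induction ?_ ?_ ?_ ?_ hu
        · rintro _ ⟨j, rfl⟩
          have e1 : (μ j : ℂ) * ⟪b ↑j, v⟫ = ((lam:ℝ) : ℂ) * ⟪b ↑j, v⟫ := by
            calc (μ j : ℂ) * ⟪b ↑j, v⟫ = ⟪S (b ↑j), v⟫ := by
                  rw [hSb, inner_smul_left, Complex.conj_ofReal]
              _ = ⟪b ↑j, S v⟫ := hSsym (b ↑j) v
              _ = ((lam:ℝ) : ℂ) * ⟪b ↑j, v⟫ := by rw [hv, inner_smul_right]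
          have e2 : ((μ j : ℂ) - ((lam:ℝ):ℂ)) * ⟪b ↑j, v⟫ = 0 := by
            rw [sub_mul, e1]; ring
          rcases mul_eq_zero.mp e2 with h | h
          · exfalso
            apply j.2
            have : ((μ j : ℝ) : ℂ) = ((lam : ℝ) : ℂ) := by
              have := sub_eq_zero.mp h
              exact_mod_cast this
            exact_mod_cast this
          · exact h
        · simp
        · intro u w _ _ hu hw
          rw [inner_add_left, hu, hw, add_zero]
        · intro c u _ hu
          rw [inner_smul_left, hu, mul_zero]
      have hWrank : Module.finrank ℂ Wspan = Fintype.card {j : Fin N // μ j ≠ lam} := by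
        rw [hWspan]
        exact finrank_span_eq_card
          (b.orthonormal.linearIndependent.comp Subtype.val Subtype.val_injective)
      have hcards : Fintype.card {j : Fin N // μ j ≠ lam} = N - P.card := by
        rw [Fintype.card_subtype_compl, hP]
        congr 1
        · simp
        · rw [Fintype.card_subtype]
      have hsum := Submodule.finrank_add_finrank_orthogonal Wspan
      rw [hN] at hsum
      have hPle : P.card ≤ N := by
        have := Finset.card_filter_le Finset.univ (fun i => μ i = lam)
        simpa using this
      have hEperp' : Module.finrank ℂ E ≤ Module.finrank ℂ Wspanᗮ :=
        Submodule.finrank_mono hEperp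
      omega
    -- combine: lam * d ≤ N * ∑ ‖f‖²
    have hlamd : lam * d ≤ (N : ℝ) * ∑ y, ‖f y‖ ^ 2 := by
      have h1 : lam * P.card = ∑ i ∈ P, μ i := by
        rw [Finset.sum_congr rfl (fun i hi => (Finset.mem_filter.mp hi).2)]
        rw [Finset.sum_const, nsmul_eq_mul]
        ring
      have h2 : ∑ i ∈ P, μ i ≤ ∑ i, μ i :=
        Finset.sum_le_sum_of_subset_of_nonneg (Finset.filter_subset _ _)
          (fun i _ _ => hμnonneg i)
      have h3 : d ≤ (P.card : ℝ) := by
        calc d ≤ (Module.finrank ℂ E : ℝ) := hdE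
          _ ≤ (P.card : ℝ) := by exact_mod_cast hfinE
      calc lam * d ≤ lam * P.card := by
            exact mul_le_mul_of_nonneg_left h3 (le_of_lt hlam0)
        _ = ∑ i ∈ P, μ i := h1
        _ ≤ ∑ i, μ i := h2
        _ = (N : ℝ) * ∑ y, ‖f y‖ ^ 2 := hμsum
    have hφ2 : (0:ℝ) ≤ ‖φ‖ ^ 2 := sq_nonneg _
    have hlamle : lam ≤ ((N : ℝ) / d) * ∑ y, ‖f y‖ ^ 2 := by
      rw [div_mul_eq_mul_div, le_div_iff₀ hd]
      calc lam * d ≤ (N : ℝ) * ∑ y, ‖f y‖ ^ 2 := hlamd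
        _ = (N:ℝ) * ∑ y, ‖f y‖ ^ 2 := rfl
    calc ‖T φ‖ ^ 2 ≤ lam * ‖φ‖ ^ 2 := hRayleigh
      _ ≤ (((N : ℝ) / d) * ∑ y, ‖f y‖ ^ 2) * ‖φ‖ ^ 2 :=
          mul_le_mul_of_nonneg_right hlamle hφ2

theorem gowers_quasirandom_group'
    (d : ℝ) (hd : 0 < d)
    (hqr : ∀ (V : Type) [AddCommGroup V] [Module ℂ V] [FiniteDimensional ℂ V]
      (ρ : Representation ℂ G V),
      Nontrivial V →
      (∀ p : Submodule ℂ V, (∀ (g : G) (v : V), v ∈ p → ρ g v ∈ p) → p = ⊥ ∨ p = ⊤) →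
      (∃ (g : G) (v : V), ρ g v ≠ v) →
      d ≤ (Module.finrank ℂ V : ℝ))
    (A B C : Finset G)
    (h : ((A.card : ℝ) * (B.card : ℝ) * (C.card : ℝ)) > (Fintype.card G : ℝ) ^ 3 / d) :
    ∃ a ∈ A, ∃ b ∈ B, ∃ c ∈ C, a * b = c := by
  classical
  by_contra hno
  push_neg at hno
  set n : ℝ := (Fintype.card G : ℝ) with hndef
  have hn : 0 < n := by
    rw [hndef]; exact_mod_cast Fintype.card_pos
  set a : ℝ := (A.card : ℝ) with hadef
  set bb : ℝ := (B.card : ℝ) with hbdef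
  set c : ℝ := (C.card : ℝ) with hcdef
  have ha0 : 0 ≤ a := Nat.cast_nonneg _
  have hb0 : 0 ≤ bb := Nat.cast_nonneg _
  have hc0 : 0 ≤ c := Nat.cast_nonneg _
  have habc : 0 < a * bb * c := lt_of_le_of_lt (by positivity) h
  have ha : 0 < a := by
    rcases ha0.lt_or_eq with h' | h'
    · exact h'
    · exfalso; rw [← h', zero_mul, zero_mul] at habc; exact lt_irrefl 0 habc
  have hb : 0 < bb := by
    rcases hb0.lt_or_eq with h' | h'
    · exact h'
    · exfalso; rw [← h', mul_zero, zero_mul] at habc; exact lt_irrefl 0 habc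
  have hc : 0 < c := by
    rcases hc0.lt_or_eq with h' | h'
    · exact h'
    · exfalso; rw [← h', mul_zero] at habc; exact lt_irrefl 0 habc
  set α : ℝ := a / n with hα
  have hα0 : 0 ≤ α := by positivity
  set f : G → ℂ := fun y => (if y ∈ A then (1:ℂ) else 0) - ((α : ℝ) : ℂ) with hfdef
  have hf : ∑ y, f y = 0 := by
    rw [hfdef]
    rw [Finset.sum_sub_distrib, Finset.sum_boole, Finset.sum_const, Finset.card_univ]
    simp only [Finset.filter_univ_mem, nsmul_eq_mul]
    have : ((Fintype.card G : ℝ) : ℂ) * ((α : ℝ) : ℂ) = ((a : ℝ) : ℂ) := by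
      rw [← Complex.ofReal_mul]
      congr 1
      rw [hα]
      field_simp
      exact hndef.symm
    push_cast at this ⊢
    rw [this, hadef]
    push_cast
    ring
  set φB : EuclideanSpace ℂ G := WithLp.toLp 2 (fun x => if x ∈ B then (1:ℂ) else 0) with hφB
  set ψC : EuclideanSpace ℂ G := WithLp.toLp 2 (fun x => if x ∈ C then (1:ℂ) else 0) with hψC
  -- value of convolution on C
  have hconvB : ∀ x ∈ C, convOp f φB x = -(((α * bb : ℝ)) : ℂ) := by
    intro x hx
    rw [convOp_apply]
    have hterm : ∀ y : G, f y * φB (y⁻¹ * x)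
        = (if y ∈ A then (1:ℂ) else 0) * (if y⁻¹ * x ∈ B then (1:ℂ) else 0)
          - ((α : ℝ) : ℂ) * (if y⁻¹ * x ∈ B then (1:ℂ) else 0) := by
      intro y
      show ((if y ∈ A then (1:ℂ) else 0) - ((α : ℝ) : ℂ)) * (if y⁻¹ * x ∈ B then (1:ℂ) else 0) = _
      ring
    rw [Finset.sum_congr rfl fun y _ => hterm y, Finset.sum_sub_distrib]
    have hzero : ∀ y : G,
        (if y ∈ A then (1:ℂ) else 0) * (if y⁻¹ * x ∈ B then (1:ℂ) else 0) = 0 := by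
      intro y
      by_cases hyA : y ∈ A
      · by_cases hyB : y⁻¹ * x ∈ B
        · exfalso
          exact hno y hyA (y⁻¹ * x) hyB x hx (by group)
        · simp [hyA, hyB]
      · simp [hyA]
    rw [Finset.sum_congr rfl fun y _ => hzero y, Finset.sum_const, smul_zero]
    have hsB : ∑ y : G, ((α : ℝ) : ℂ) * (if y⁻¹ * x ∈ B then (1:ℂ) else 0)
        = ((α : ℝ) : ℂ) * bb := by
      rw [← Finset.mul_sum]
      congr 1
      have := Fintype.sum_equiv ((Equiv.inv G).trans (Equiv.mulRight x))
        (fun y => if y⁻¹ * x ∈ B then (1:ℂ) else 0)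
        (fun u => if u ∈ B then (1:ℂ) else 0) (fun y => rfl)
      rw [this, Finset.sum_boole]
      simp [hbdef]
    rw [hsB]
    push_cast
    ring
  -- the inner product
  have hKEY : ⟪ψC, convOp f φB⟫ = -(((α * bb * c : ℝ)) : ℂ) := by
    rw [PiLp.inner_apply]
    have hterm : ∀ x : G, (inner ℂ (ψC x) (convOp f φB x) : ℂ)
        = if x ∈ C then convOp f φB x else 0 := by
      intro x
      rw [RCLike.inner_apply', hψC]
      show (starRingEnd ℂ) (if x ∈ C then (1:ℂ) else 0) * _ = _
      by_cases hx : x ∈ C <;> simp [hx]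
    rw [Finset.sum_congr rfl fun x _ => hterm x]
    rw [Finset.sum_ite_mem, Finset.univ_inter]
    rw [Finset.sum_congr rfl hconvB, Finset.sum_const]
    rw [hcdef]
    push_cast
    ring
  -- norms
  have hψnorm : ‖ψC‖ ^ 2 = c := by
    rw [EuclideanSpace.norm_eq, Real.sq_sqrt (Finset.sum_nonneg fun x _ => by positivity)]
    have : ∀ x : G, ‖ψC x‖ ^ 2 = if x ∈ C then (1:ℝ) else 0 := by
      intro x
      rw [hψC]
      show ‖if x ∈ C then (1:ℂ) else 0‖ ^ 2 = _
      by_cases hx : x ∈ C <;> simp [hx]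
    rw [Finset.sum_congr rfl fun x _ => this x, Finset.sum_boole]
    simp [hcdef]
  have hφnorm : ‖φB‖ ^ 2 = bb := by
    rw [EuclideanSpace.norm_eq, Real.sq_sqrt (Finset.sum_nonneg fun x _ => by positivity)]
    have : ∀ x : G, ‖φB x‖ ^ 2 = if x ∈ B then (1:ℝ) else 0 := by
      intro x
      rw [hφB]
      show ‖if x ∈ B then (1:ℂ) else 0‖ ^ 2 = _
      by_cases hx : x ∈ B <;> simp [hx]
    rw [Finset.sum_congr rfl fun x _ => this x, Finset.sum_boole]
    simp [hbdef]
  have hfnorm : ∑ y, ‖f y‖ ^ 2 ≤ a := by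
    have hterm : ∀ y : G, ‖f y‖ ^ 2 = if y ∈ A then (1 - α)^2 else α^2 := by
      intro y
      rw [hfdef]
      by_cases hy : y ∈ A
      · simp only [hy, if_true]
        have : (1 : ℂ) - ((α:ℝ):ℂ) = (((1 - α : ℝ)) : ℂ) := by push_cast; ring
        rw [this, Complex.norm_real, Real.norm_eq_abs, sq_abs]
      · simp only [hy, if_false]
        have : (0 : ℂ) - ((α:ℝ):ℂ) = ((-α : ℝ) : ℂ) := by push_cast; ring
        rw [this, Complex.norm_real, Real.norm_eq_abs, sq_abs]
        ring
    rw [Finset.sum_congr rfl fun y _ => hterm y]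
    rw [Finset.sum_ite, Finset.sum_const, Finset.sum_const]
    simp only [Finset.filter_univ_mem, nsmul_eq_mul]
    have hcard2 : ((Finset.univ.filter (fun y => ¬ y ∈ A)).card : ℝ) = n - a := by
      rw [Finset.filter_not]
      simp only [Finset.filter_univ_mem]
      rw [Finset.card_sdiff_of_subset (Finset.subset_univ A),
        Nat.cast_sub (Finset.card_le_card (Finset.subset_univ A)), Finset.card_univ]
    rw [hcard2, hadef.symm]
    have hna : n * α = a := by rw [hα]; field_simp
    nlinarith [sq_nonneg α, sq_nonneg (1-α), ha, hn, Finset.card_le_univ A]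
  -- Cauchy–Schwarz and the operator bound
  have hCS : ‖⟪ψC, convOp f φB⟫‖ ≤ ‖ψC‖ * ‖convOp f φB‖ := norm_inner_le_norm _ _
  have hKEYnorm : ‖⟪ψC, convOp f φB⟫‖ = α * bb * c := by
    rw [hKEY, norm_neg, Complex.norm_real, Real.norm_eq_abs,
      abs_of_nonneg (mul_nonneg (mul_nonneg hα0 hb0) hc0)]
  have hop : ‖convOp f φB‖ ^ 2 ≤ (n / d) * (∑ y, ‖f y‖ ^ 2) * ‖φB‖ ^ 2 :=
    convOp_sq_norm_le d hd hqr f hf φB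
  have hopa : ‖convOp f φB‖ ^ 2 ≤ (n / d) * a * bb := by
    rw [hφnorm] at hop
    calc ‖convOp f φB‖ ^ 2 ≤ (n / d) * (∑ y, ‖f y‖ ^ 2) * bb := hop
      _ ≤ (n / d) * a * bb := by
          have hnd0 : (0:ℝ) ≤ n / d := div_nonneg (le_of_lt hn) (le_of_lt hd)
          exact mul_le_mul_of_nonneg_right
            (mul_le_mul_of_nonneg_left hfnorm hnd0) hb0
  -- squared Cauchy–Schwarz
  have hsq : (α * bb * c) ^ 2 ≤ c * ((n / d) * a * bb) := by
    have h1 : (α * bb * c) ^ 2 ≤ (‖ψC‖ * ‖convOp f φB‖) ^ 2 := by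
      rw [← hKEYnorm]
      exact pow_le_pow_left₀ (norm_nonneg _) hCS 2
    calc (α * bb * c) ^ 2 ≤ (‖ψC‖ * ‖convOp f φB‖) ^ 2 := h1
      _ = ‖ψC‖ ^ 2 * ‖convOp f φB‖ ^ 2 := by ring
      _ ≤ c * ((n / d) * a * bb) := by
          rw [hψnorm]
          exact mul_le_mul_of_nonneg_left hopa hc0
  -- contradiction
  have hfinal : a * bb * c ≤ n ^ 3 / d := by
    rw [hα] at hsq
    have hne : n ≠ 0 := ne_of_gt hn
    have h3 := mul_le_mul_of_nonneg_right hsq (le_of_lt (mul_pos (mul_pos hn hn) hd))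
    have h2 : (a * bb * c) ^ 2 * d ≤ (a * bb * c) * n ^ 3 := by
      calc (a * bb * c) ^ 2 * d = (a / n * bb * c) ^ 2 * (n * n * d) := by
            field_simp
        _ ≤ c * ((n / d) * a * bb) * (n * n * d) := h3
        _ = (a * bb * c) * n ^ 3 := by
            field_simp
    have h2' : (a * bb * c) * ((a * bb * c) * d) ≤ (a * bb * c) * n ^ 3 := by
      rw [show (a * bb * c) * ((a * bb * c) * d) = (a * bb * c) ^ 2 * d by ring]
      exact h2
    have h4 : (a * bb * c) * d ≤ n ^ 3 := le_of_mul_le_mul_left h2' habc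
    rw [le_div_iff₀ hd]
    exact h4
  linarith [h, hfinal]

end GowersAux

/-- Gowers' theorem: in a finite `d`-quasirandom group `G` of order `n` (every
nontrivial complex irreducible representation has dimension at least `d`), any three
subsets `A, B, C` with `|A||B||C| > n³/d` satisfy `AB ∩ C ≠ ∅`. -/
theorem gowers_quasirandom_group
    {G : Type*} [Group G] [Fintype G] [DecidableEq G]
    (d : ℝ) (hd : 0 < d)
    (hqr : ∀ (V : Type) [AddCommGroup V] [Module ℂ V] [FiniteDimensional ℂ V]
      (ρ : Representation ℂ G V),
      Nontrivial V →
      (∀ p : Submodule ℂ V, (∀ (g : G) (v : V), v ∈ p → ρ g v ∈ p) → p = ⊥ ∨ p = ⊤) →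
      (∃ (g : G) (v : V), ρ g v ≠ v) →
      d ≤ (Module.finrank ℂ V : ℝ))
    (A B C : Finset G)
    (h : ((A.card : ℝ) * (B.card : ℝ) * (C.card : ℝ)) > (Fintype.card G : ℝ) ^ 3 / d) :
    ∃ a ∈ A, ∃ b ∈ B, ∃ c ∈ C, a * b = c :=
  gowers_quasirandom_group' d hd hqr A B C h
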